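/- Let X be a d-space such that ↓(A ∩ K) is closed for every closed set A and every nonempty compact saturated set K. Then X is well-filtered. -/

import Mathlib

open Set

universe u

variable {α : Type u}

/-- The specialization order used in the paper: `x ≤ y` iff `x ∈ closure {y}`. -/
def specLE [TopologicalSpace α] (x y : α) : Prop := x ∈ closure ({y} : Set α)

/-- `↑x = {y | x ≤ y}` in the specialization order. -/
def upOf [TopologicalSpace α] (x : α) : Set α := {y | specLE x y}

/-- `↑F = {y | ∃ a ∈ F, a ≤ y}` in the specialization order. -/
def upSetOf [TopologicalSpace α] (F : Set α) : Set α := {y | ∃ a ∈ F, specLE a y}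

/-- `↓B = {x | ∃ b ∈ B, x ≤ b}` in the specialization order. -/
def downOf [TopologicalSpace α] (B : Set α) : Set α := {x | ∃ b ∈ B, specLE x b}

/-- A set directed with respect to the specialization order: nonempty, and any two
elements have an upper bound in it. -/
def SDirected [TopologicalSpace α] (D : Set α) : Prop :=
  D.Nonempty ∧ ∀ a ∈ D, ∀ b ∈ D, ∃ c ∈ D, specLE a c ∧ specLE b c

/-- `s` is a supremum (least upper bound) of `D` in the specialization order. -/
def SIsSup [TopologicalSpace α] (D : Set α) (s : α) : Prop :=
  (∀ d ∈ D, specLE d s) ∧ ∀ t : α, (∀ d ∈ D, specLE d t) → specLE s t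

/-- Upper set (= saturated set) in the specialization order. -/
def SUpper [TopologicalSpace α] (A : Set α) : Prop :=
  ∀ ⦃x y : α⦄, x ∈ A → specLE x y → y ∈ A

/-- Scott open set with respect to the specialization order. -/
def SScottOpen [TopologicalSpace α] (U : Set α) : Prop :=
  SUpper U ∧ ∀ D : Set α, SDirected D → ∀ s : α, SIsSup D s → s ∈ U → (D ∩ U).Nonempty

/-- A d-space: a dcpo under the specialization order, all open sets Scott open. -/
def IsDSpace (α : Type u) [TopologicalSpace α] : Prop :=
  (∀ D : Set α, SDirected D → ∃ s : α, SIsSup D s) ∧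
    ∀ U : Set α, IsOpen U → SScottOpen U

/-- Member of `K(X)`: nonempty, compact and saturated. -/
def IsKSet [TopologicalSpace α] (K : Set α) : Prop :=
  K.Nonempty ∧ IsCompact K ∧ SUpper K

/-- A filtered family of sets: nonempty, and any two members contain a common member. -/
def FilteredFam (𝒦 : Set (Set α)) : Prop :=
  𝒦.Nonempty ∧ ∀ K1 ∈ 𝒦, ∀ K2 ∈ 𝒦, ∃ K3 ∈ 𝒦, K3 ⊆ K1 ∩ K2

/-- Well-filtered space: for every filtered family of nonempty compact saturated sets whose
intersection is contained in an open `U`, some member is contained in `U`. -/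
def IsWellFiltered (α : Type u) [TopologicalSpace α] : Prop :=
  ∀ 𝒦 : Set (Set α), (∀ K ∈ 𝒦, IsKSet K) → FilteredFam 𝒦 →
    ∀ U : Set α, IsOpen U → ⋂₀ 𝒦 ⊆ U → ∃ K ∈ 𝒦, K ⊆ U

/-- Rudin set: a nonempty set `A` such that for some filtered family `𝒦 ⊆ K(X)`,
`closure A` is a minimal closed set meeting every member of `𝒦`. -/
def IsRudin [TopologicalSpace α] (A : Set α) : Prop :=
  A.Nonempty ∧ ∃ 𝒦 : Set (Set α), (∀ K ∈ 𝒦, IsKSet K) ∧ FilteredFam 𝒦 ∧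
    (∀ K ∈ 𝒦, (closure A ∩ K).Nonempty) ∧
    ∀ B : Set α, IsClosed B → B ⊆ closure A → (∀ K ∈ 𝒦, (B ∩ K).Nonempty) → B = closure A

/-- Well-filtered determined set: every continuous map into a well-filtered T0 space sends it
to a set whose closure is the closure of a unique point. -/
def IsWFD [TopologicalSpace α] (A : Set α) : Prop :=
  ∀ (Y : Type u) [TopologicalSpace Y] [T0Space Y], IsWellFiltered Y →
    ∀ f : α → Y, Continuous f → ∃! y : Y, closure (f '' A) = closure ({y} : Set Y)

/-- Irreducible set. -/
def IsIrred [TopologicalSpace α] (A : Set α) : Prop :=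
  A.Nonempty ∧ ∀ F1 F2 : Set α, IsClosed F1 → IsClosed F2 → A ⊆ F1 ∪ F2 → A ⊆ F1 ∨ A ⊆ F2

/-- Sober space: every irreducible closed set is the closure of a unique point. -/
def IsSober (α : Type u) [TopologicalSpace α] : Prop :=
  ∀ A : Set α, IsClosed A → IsIrred A → ∃! x : α, A = closure ({x} : Set α)

/-- `A` has a maximal element with respect to the specialization order. -/
def HasMaxElem [TopologicalSpace α] (A : Set α) : Prop :=
  ∃ m ∈ A, ∀ a ∈ A, specLE m a → a = m

/-- Strong d-space. -/
def IsStrongDSpace (α : Type u) [TopologicalSpace α] : Prop :=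
  ∀ D : Set α, SDirected D → ∀ x : α, ∀ U : Set α, IsOpen U →
    (⋂ d ∈ D, upOf d) ∩ upOf x ⊆ U → ∃ d ∈ D, upOf d ∩ upOf x ⊆ U

section Aux

variable [TopologicalSpace α]

lemma specLE_refl (x : α) : specLE x x := subset_closure rfl

lemma specLE_trans {x y z : α} (hxy : specLE x y) (hyz : specLE y z) : specLE x z := by
  have : closure ({y} : Set α) ⊆ closure ({z} : Set α) :=
    closure_minimal (singleton_subset_iff.2 hyz) isClosed_closure
  exact this hxy

lemma specLE_antisymm [T0Space α] {x y : α} (hxy : specLE x y) (hyx : specLE y x) : x = y := by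
  have h1 : closure ({x} : Set α) ⊆ closure ({y} : Set α) :=
    closure_minimal (singleton_subset_iff.2 hxy) isClosed_closure
  have h2 : closure ({y} : Set α) ⊆ closure ({x} : Set α) :=
    closure_minimal (singleton_subset_iff.2 hyx) isClosed_closure
  exact ((inseparable_iff_closure_eq).2 (le_antisymm h1 h2)).eq

lemma closed_mem_of_specLE {C : Set α} (hC : IsClosed C) {x b : α} (hb : b ∈ C)
    (hxb : specLE x b) : x ∈ C := by
  have : closure ({b} : Set α) ⊆ C := closure_minimal (by simpa using hb) hC
  exact this hxb

end Aux

/-- a d-space in which `↓(A ∩ K)` is closed for all closed `A` and all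
nonempty compact saturated `K` is well-filtered. -/
theorem stmt_14 (α : Type u) [TopologicalSpace α] [T0Space α] (hd : IsDSpace α)
    (h : ∀ A K : Set α, IsClosed A → IsKSet K → IsClosed (downOf (A ∩ K))) :
    IsWellFiltered α := by
  intro 𝒦 hK hfil U hU hsub
  by_contra hcon
  push_neg at hcon
  -- Every member of 𝒦 meets Uᶜ
  have hmeet : ∀ K ∈ 𝒦, (Uᶜ ∩ K).Nonempty := by
    intro K hKmem
    rcases not_subset.1 (hcon K hKmem) with ⟨x, hxK, hxU⟩
    exact ⟨x, hxU, hxK⟩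
  -- The family of candidate closed sets
  set S : Set (Set α) := {C | IsClosed C ∧ C ⊆ Uᶜ ∧ ∀ K ∈ 𝒦, (C ∩ K).Nonempty} with hS
  have hUc : Uᶜ ∈ S := ⟨hU.isClosed_compl, subset_rfl, hmeet⟩
  -- Zorn: a minimal element of S
  have hzorn : ∀ c ⊆ S, IsChain (· ⊆ ·) c → c.Nonempty → ∃ lb ∈ S, ∀ s ∈ c, lb ⊆ s := by
    intro c hcS hchain hcne
    refine ⟨⋂₀ c, ⟨isClosed_sInter fun C hC => (hcS hC).1, ?_, ?_⟩, fun s hs => sInter_subset_of_mem hs⟩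
    · obtain ⟨C0, hC0⟩ := hcne
      exact (sInter_subset_of_mem hC0).trans (hcS hC0).2.1
    · intro K hKmem
      obtain ⟨hKne, hKc, hKsat⟩ := hK K hKmem
      by_contra hempty
      rw [not_nonempty_iff_eq_empty] at hempty
      have hempty' : (K ∩ ⋂ C : c, (C : Set α)) = ∅ := by
        rw [← hempty]
        rw [sInter_eq_iInter]
        exact inter_comm _ _
      obtain ⟨t, ht⟩ := hKc.elim_finite_subfamily_closed (fun C : c => (C : Set α))
        (fun C => (hcS C.2).1) hempty'
      rcases t.eq_empty_or_nonempty with rfl | htne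
      · simp only [Finset.notMem_empty, iInter_of_empty, iInter_univ, inter_univ] at ht
        exact hKne.ne_empty ht
      · obtain ⟨m, hmt, hmmin⟩ := t.exists_minimal htne
        have hmle : ∀ x ∈ t, (m : Set α) ⊆ (x : Set α) := by
          intro x hxt
          rcases eq_or_ne (x : Set α) (m : Set α) with heq | hne
          · exact subset_of_eq heq.symm
          · rcases hchain x.2 m.2 hne with hle | hle
            · exact absurd (hmmin hxt (Subtype.coe_lt_coe.mp (lt_of_le_of_ne hle hne)).le) (not_le_of_gt (Subtype.coe_lt_coe.mp (lt_of_le_of_ne hle hne)))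
            · exact hle
        have : ((m : Set α) ∩ K) = ∅ := by
          have hsub' : (m : Set α) ∩ K ⊆ K ∩ ⋂ C ∈ t, (C : Set α) := by
            intro x hx
            refine ⟨hx.2, mem_iInter₂.2 fun C hCt => hmle C hCt hx.1⟩
          rw [ht] at hsub'
          exact eq_empty_of_subset_empty hsub'
        exact ((hcS m.2).2.2 K hKmem).ne_empty this
  obtain ⟨C, -, hCS, hCmin⟩ := zorn_superset_nonempty S hzorn Uᶜ hUc
  obtain ⟨hCcl, hCU, hCmeets⟩ := hCS
  -- C is nonempty
  obtain ⟨K0, hK0⟩ := hfil.1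
  have hCne : C.Nonempty := ((hCmeets K0 hK0).mono inter_subset_left).mono subset_rfl
  -- For each K ∈ 𝒦, C = ↓(C ∩ K)
  have hCeq : ∀ K ∈ 𝒦, C = downOf (C ∩ K) := by
    intro K hKmem
    have hdcl : IsClosed (downOf (C ∩ K)) := h C K hCcl (hK K hKmem)
    have hdsub : downOf (C ∩ K) ⊆ C := by
      rintro x ⟨b, ⟨hbC, -⟩, hxb⟩
      exact closed_mem_of_specLE hCcl hbC hxb
    have hdmeets : ∀ K' ∈ 𝒦, (downOf (C ∩ K) ∩ K').Nonempty := by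
      intro K' hK'mem
      obtain ⟨K3, hK3mem, hK3sub⟩ := hfil.2 K hKmem K' hK'mem
      obtain ⟨x, hxC, hxK3⟩ := hCmeets K3 hK3mem
      exact ⟨x, ⟨x, ⟨hxC, (hK3sub hxK3).1⟩, specLE_refl x⟩, (hK3sub hxK3).2⟩
    exact subset_antisymm (hCmin ⟨hdcl, hdsub.trans hCU, hdmeets⟩ hdsub) hdsub
  -- C has a maximal element, via Zorn on the subtype
  haveI : Nonempty {x // x ∈ C} := ⟨⟨hCne.choose, hCne.choose_spec⟩⟩
  have hchains : ∀ ch : Set {x // x ∈ C},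
      IsChain (fun a b : {x // x ∈ C} => specLE (a : α) (b : α)) ch →
      ∃ ub : {x // x ∈ C}, ∀ a ∈ ch, specLE (a : α) (ub : α) := by
    intro ch hch
    rcases ch.eq_empty_or_nonempty with rfl | hchne
    · exact ⟨Classical.arbitrary _, by simp⟩
    · set D : Set α := (fun a : {x // x ∈ C} => (a : α)) '' ch with hD
      have hDC : D ⊆ C := by rintro x ⟨a, -, rfl⟩; exact a.2
      have hDdir : SDirected D := by
        constructor
        · exact hchne.image _
        · rintro a ⟨a', ha', rfl⟩ b ⟨b', hb', rfl⟩
          rcases eq_or_ne a' b' with rfl | hne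
          · exact ⟨a', ⟨a', ha', rfl⟩, specLE_refl _, specLE_refl _⟩
          · rcases hch ha' hb' hne with hle | hle
            · exact ⟨b', ⟨b', hb', rfl⟩, hle, specLE_refl _⟩
            · exact ⟨a', ⟨a', ha', rfl⟩, specLE_refl _, hle⟩
      obtain ⟨s, hssup⟩ := hd.1 D hDdir
      have hsC : s ∈ C := by
        by_contra hsC
        have hscott := hd.2 Cᶜ hCcl.isOpen_compl
        obtain ⟨x, hxD, hxCc⟩ := hscott.2 D hDdir s hssup hsC
        exact hxCc (hDC hxD)
      exact ⟨⟨s, hsC⟩, fun a ha => hssup.1 (a : α) ⟨a, ha, rfl⟩⟩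
  obtain ⟨m, hm⟩ := exists_maximal_of_chains_bounded
    (r := fun a b : {x // x ∈ C} => specLE (a : α) (b : α)) hchains
    (fun hab hbc => specLE_trans hab hbc)
  -- m is in every K ∈ 𝒦
  have hmK : ∀ K ∈ 𝒦, (m : α) ∈ K := by
    intro K hKmem
    have : (m : α) ∈ downOf (C ∩ K) := (hCeq K hKmem) ▸ m.2
    obtain ⟨b, ⟨hbC, hbK⟩, hmb⟩ := this
    have : b = (m : α) := specLE_antisymm (hm ⟨b, hbC⟩ hmb) hmb
    exact this ▸ hbK
  have : (m : α) ∈ U := hsub fun K hKmem => hmK K hKmem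
  exact hCU m.2 this
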